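/- Define the four BB84 qubit states ρ_1 := (1/2)(1 + σz), ρ_2 := (1/2)(1 − σz), ρ_3 := (1/2)(1 + σx), ρ_4 := (1/2)(1 − σx), and for η ∈ [0,1] the noisy states ρ^η_a := η • ρ_a + (1−η) • (1/2) • 1. Then the set of states (ρ^η_a)_{a=1,...,4} on ℂ² is classical if and only if η ≤ √2/2; i.e. the white-noise robustness of the BB84 state set equals 1/√2. -/

import Mathlib

open Matrix BigOperators
open scoped ComplexOrder

noncomputable section

def σx : Matrix (Fin 2) (Fin 2) ℂ := !![0, 1; 1, 0]
def σz : Matrix (Fin 2) (Fin 2) ℂ := !![1, 0; 0, -1]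

/-- The noncontextual preparation-assignment polytope of a set of states. -/
def statesPolytope {d : ℕ} {A : Type*} [Fintype A]
    (ρ : A → Matrix (Fin d) (Fin d) ℂ) : Set (A → ℝ) :=
  {q | (∀ a, 0 ≤ q a) ∧ (∑ a : A, q a = 1) ∧
    ∀ α : A → ℝ, (∑ a : A, α a • ρ a = 0) → (∑ a : A, α a * q a = 0)}

/-- A set of states is classical. -/
def IsClassicalStates {d : ℕ} {A : Type*} [Fintype A]
    (ρ : A → Matrix (Fin d) (Fin d) ℂ) : Prop :=
  ∃ (n : ℕ) (σ : Fin n → Matrix (Fin d) (Fin d) ℂ) (q : Fin n → A → ℝ),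
    (∀ l, (σ l).PosSemidef) ∧
    (∀ l, q l ∈ statesPolytope ρ) ∧
    (∀ a : A, ρ a = ∑ l, q l a • σ l)

/-- The four BB84 qubit states. -/
def bb84States : Fin 4 → Matrix (Fin 2) (Fin 2) ℂ :=
  ![(2 : ℝ)⁻¹ • ((1 : Matrix (Fin 2) (Fin 2) ℂ) + σz),
    (2 : ℝ)⁻¹ • ((1 : Matrix (Fin 2) (Fin 2) ℂ) - σz),
    (2 : ℝ)⁻¹ • ((1 : Matrix (Fin 2) (Fin 2) ℂ) + σx),
    (2 : ℝ)⁻¹ • ((1 : Matrix (Fin 2) (Fin 2) ℂ) - σx)]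

/-! ### Auxiliary material -/

/-- The noisy BB84 states, written with explicit real entries. -/
def Rmat (η : ℝ) : Fin 4 → Matrix (Fin 2) (Fin 2) ℂ :=
    ![!![(((1+η)/2 : ℝ) : ℂ), 0; 0, (((1-η)/2 : ℝ) : ℂ)],
      !![(((1-η)/2 : ℝ) : ℂ), 0; 0, (((1+η)/2 : ℝ) : ℂ)],
      !![((1/2 : ℝ) : ℂ), ((η/2 : ℝ) : ℂ); ((η/2 : ℝ) : ℂ), ((1/2 : ℝ) : ℂ)],
      !![((1/2 : ℝ) : ℂ), ((-(η/2) : ℝ) : ℂ); ((-(η/2) : ℝ) : ℂ), ((1/2 : ℝ) : ℂ)]]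

lemma rho_eq (η : ℝ) :
    (fun a : Fin 4 => η • bb84States a + ((1 - η) * (2 : ℝ)⁻¹) • (1 : Matrix (Fin 2) (Fin 2) ℂ)) =
    Rmat η := by
  funext a
  fin_cases a <;>
    (ext i j; fin_cases i <;> fin_cases j <;>
      (simp [bb84States, σx, σz, Matrix.one_apply, Rmat]; try (push_cast; ring)))

/-- A real symmetric 2×2 matrix with nonnegative diagonal and nonnegative determinant
is positive semidefinite. -/
lemma psd_of_real (a b d : ℝ) (ha : 0 ≤ a) (hd : 0 ≤ d) (h : b ^ 2 ≤ a * d) :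
    Matrix.PosSemidef !![(a : ℂ), b; b, d] := by
  rw [Matrix.posSemidef_iff_dotProduct_mulVec]
  constructor
  · ext i j
    fin_cases i <;> fin_cases j <;>
      simp [Matrix.conjTranspose_apply, Complex.conj_ofReal]
  · intro x
    have hx : star x ⬝ᵥ !![(a : ℂ), b; b, d] *ᵥ x =
        (starRingEnd ℂ) (x 0) * (a * x 0 + b * x 1) +
          (starRingEnd ℂ) (x 1) * (b * x 0 + d * x 1) := by
      simp [dotProduct, Matrix.mulVec, Fin.sum_univ_two, mul_comm]
    rw [hx, Complex.le_def]
    set p := (x 0).re; set pi := (x 0).im; set q := (x 1).re; set qi := (x 1).im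
    constructor
    · simp only [Complex.add_re, Complex.mul_re, Complex.mul_im, Complex.add_im,
        Complex.ofReal_re, Complex.ofReal_im, Complex.zero_re, map_apply]
      simp [Complex.conj_re, Complex.conj_im]
      rcases ha.eq_or_lt with h0 | h0
      · have hb : b = 0 := by nlinarith [sq_nonneg b]
        subst hb
        nlinarith [sq_nonneg q, sq_nonneg qi, sq_nonneg p, sq_nonneg pi,
          mul_nonneg hd (sq_nonneg q), mul_nonneg hd (sq_nonneg qi)]
      · nlinarith [sq_nonneg (a * p + b * q), sq_nonneg (a * pi + b * qi),
          mul_nonneg (sub_nonneg.2 h) (add_nonneg (sq_nonneg q) (sq_nonneg qi)),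
          sq_nonneg q, sq_nonneg qi]
    · simp only [Complex.add_im, Complex.mul_re, Complex.mul_im,
        Complex.ofReal_re, Complex.ofReal_im, Complex.zero_im]
      simp [Complex.conj_re, Complex.conj_im]
      ring

/-- Basic scalar facts extracted from a 2×2 positive semidefinite matrix. -/
lemma psd_facts {M : Matrix (Fin 2) (Fin 2) ℂ} (h : M.PosSemidef) :
    0 ≤ (M 0 0).re ∧ 0 ≤ (M 1 1).re ∧
      ((M 0 1).re + (M 1 0).re) ^ 2 ≤ 4 * ((M 0 0).re * (M 1 1).re) := by
  have h1 : 0 ≤ (M 0 0).re := by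
    have H := h.dotProduct_mulVec_nonneg ![1, 0]
    rw [Complex.le_def] at H
    obtain ⟨H1, -⟩ := H
    simpa [dotProduct, Matrix.mulVec, Fin.sum_univ_two] using H1
  have h2 : 0 ≤ (M 1 1).re := by
    have H := h.dotProduct_mulVec_nonneg ![0, 1]
    rw [Complex.le_def] at H
    obtain ⟨H1, -⟩ := H
    simpa [dotProduct, Matrix.mulVec, Fin.sum_univ_two] using H1
  refine ⟨h1, h2, ?_⟩
  have hq : ∀ r : ℝ, 0 ≤ (M 0 0).re * (r * r) + ((M 0 1).re + (M 1 0).re) * r + (M 1 1).re := by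
    intro r
    have H := h.dotProduct_mulVec_nonneg ![(r : ℂ), 1]
    rw [Complex.le_def] at H
    obtain ⟨H1, -⟩ := H
    simp [dotProduct, Matrix.mulVec, Fin.sum_univ_two, Complex.add_re, Complex.mul_re,
      Complex.add_im, Complex.mul_im] at H1
    nlinarith [H1]
  have := discrim_le_zero hq
  rw [discrim] at this
  nlinarith [this]

/-- A Cauchy–Schwarz style inequality used for the per-hidden-state bound. -/
lemma keyIneq (A B u v t : ℝ) (hA : A ^ 2 ≤ 1 / 4) (hB : B ^ 2 ≤ 1 / 4)
    (huv : u ^ 2 + v ^ 2 ≤ t ^ 2) (ht : 0 ≤ t) :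
    Real.sqrt 2 * (A * u + B * v) ≤ t := by
  have hs : Real.sqrt 2 ^ 2 = 2 := Real.sq_sqrt (by norm_num)
  have hs0 : (0:ℝ) ≤ Real.sqrt 2 := Real.sqrt_nonneg 2
  have cauchy : (A * u + B * v) ^ 2 ≤ (A ^ 2 + B ^ 2) * (u ^ 2 + v ^ 2) := by
    nlinarith [sq_nonneg (A * v - B * u)]
  have h1 : (Real.sqrt 2 * (A * u + B * v)) ^ 2 ≤ t ^ 2 := by
    have h2 : (A ^ 2 + B ^ 2) * (u ^ 2 + v ^ 2) ≤ (1/2) * t ^ 2 := by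
      nlinarith [sq_nonneg u, sq_nonneg v, add_nonneg (sq_nonneg u) (sq_nonneg v)]
    calc (Real.sqrt 2 * (A * u + B * v)) ^ 2 = 2 * (A * u + B * v) ^ 2 := by
          rw [mul_pow, hs]
      _ ≤ t ^ 2 := by nlinarith
  rcases le_or_gt (A * u + B * v) 0 with hle | hlt
  · have : Real.sqrt 2 * (A * u + B * v) ≤ 0 := mul_nonpos_of_nonneg_of_nonpos hs0 hle
    linarith
  · nlinarith [mul_nonneg (mul_pos (Real.sqrt_pos.2 (by norm_num : (0:ℝ) < 2)) hlt).le ht,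
      sq_nonneg (Real.sqrt 2 * (A * u + B * v) - t)]

/-- Forward direction: a classical model forces `η ≤ √2 / 2`. -/
lemma forward (η : ℝ) (h : IsClassicalStates (Rmat η)) : η ≤ Real.sqrt 2 / 2 := by
  obtain ⟨n, σ, q, hψ, hq, hρ⟩ := h
  -- the linear dependency
  have hdep : ∑ a : Fin 4, (![1,1,-1,-1] : Fin 4 → ℝ) a • Rmat η a = 0 := by
    ext i j
    fin_cases i <;> fin_cases j <;>
      (simp [Fin.sum_univ_four, Rmat]; try (push_cast; ring))
  have hpair : ∀ l, q l 0 + q l 1 = 1/2 ∧ q l 2 + q l 3 = 1/2 := by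
    intro l
    have hc := (hq l).2.2 ![1,1,-1,-1] hdep
    have hs1 := (hq l).2.1
    simp [Fin.sum_univ_four] at hc hs1
    constructor <;> linarith
  -- entry extraction
  have hent : ∀ (a : Fin 4) (i j : Fin 2),
      (Rmat η a i j).re = ∑ l, q l a * (σ l i j).re := by
    intro a i j
    have hh := congrArg (fun M => (M i j).re) (hρ a)
    simpa [Matrix.sum_apply, Complex.smul_re, smul_eq_mul] using hh
  have e1 := hent 0 0 0
  have e2 := hent 1 0 0
  have e3 := hent 0 1 1
  have e4 := hent 1 1 1
  have f1 := hent 2 0 1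
  have f2 := hent 3 0 1
  have f3 := hent 2 1 0
  have f4 := hent 3 1 0
  simp [Rmat] at e1 e2 e3 e4 f1 f2 f3 f4
  -- the key sums
  have hz : ∑ l, ((q l 0 - q l 1) * ((σ l 0 0).re - (σ l 1 1).re)
      + (q l 2 - q l 3) * ((σ l 0 1).re + (σ l 1 0).re)) = 4 * η := by
    have expand : ∀ l : Fin n, (q l 0 - q l 1) * ((σ l 0 0).re - (σ l 1 1).re)
        + (q l 2 - q l 3) * ((σ l 0 1).re + (σ l 1 0).re)
        = (q l 0 * (σ l 0 0).re - q l 1 * (σ l 0 0).re)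
          - (q l 0 * (σ l 1 1).re - q l 1 * (σ l 1 1).re)
          + (q l 2 * (σ l 0 1).re - q l 3 * (σ l 0 1).re)
          + (q l 2 * (σ l 1 0).re - q l 3 * (σ l 1 0).re) := by intro l; ring
    rw [Finset.sum_congr rfl (fun l _ => expand l)]
    rw [Finset.sum_add_distrib, Finset.sum_add_distrib, Finset.sum_sub_distrib,
      Finset.sum_sub_distrib, Finset.sum_sub_distrib, Finset.sum_sub_distrib,
      Finset.sum_sub_distrib]
    rw [← e1, ← e2, ← e3, ← e4, ← f1, ← f2, ← f3, ← f4]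
    ring
  have ht4 : ∑ l, ((σ l 0 0).re + (σ l 1 1).re) = 4 := by
    have expand : ∀ l : Fin n, (1:ℝ)/2 * ((σ l 0 0).re + (σ l 1 1).re)
        = (q l 0 * (σ l 0 0).re + q l 1 * (σ l 0 0).re)
          + (q l 0 * (σ l 1 1).re + q l 1 * (σ l 1 1).re) := by
      intro l
      have h := (hpair l).1
      linear_combination (-((σ l 0 0).re + (σ l 1 1).re)) * h
    have : ∑ l, (1:ℝ)/2 * ((σ l 0 0).re + (σ l 1 1).re) = 2 := by
      rw [Finset.sum_congr rfl (fun l _ => expand l)]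
      rw [Finset.sum_add_distrib, Finset.sum_add_distrib, Finset.sum_add_distrib]
      rw [← e1, ← e2, ← e3, ← e4]
      ring
    rw [← Finset.mul_sum] at this
    linarith
  -- per-hidden-state bound
  have bound : ∀ l : Fin n, Real.sqrt 2 * ((q l 0 - q l 1) * ((σ l 0 0).re - (σ l 1 1).re)
      + (q l 2 - q l 3) * ((σ l 0 1).re + (σ l 1 0).re))
      ≤ (σ l 0 0).re + (σ l 1 1).re := by
    intro l
    obtain ⟨d1, d2, d3⟩ := psd_facts (hψ l)
    obtain ⟨hp1, hp2⟩ := hpair l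
    have hn := (hq l).1
    apply keyIneq
    · nlinarith [hn 0, hn 1]
    · nlinarith [hn 2, hn 3]
    · nlinarith
    · linarith
  have total : Real.sqrt 2 * (4 * η) ≤ 4 := by
    calc Real.sqrt 2 * (4 * η)
        = ∑ l, Real.sqrt 2 * ((q l 0 - q l 1) * ((σ l 0 0).re - (σ l 1 1).re)
          + (q l 2 - q l 3) * ((σ l 0 1).re + (σ l 1 0).re)) := by
          rw [← Finset.mul_sum, hz]
      _ ≤ ∑ l, ((σ l 0 0).re + (σ l 1 1).re) :=
          Finset.sum_le_sum (fun l _ => bound l)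
      _ = 4 := ht4
  have hs : Real.sqrt 2 ^ 2 = 2 := Real.sq_sqrt (by norm_num)
  nlinarith [Real.sqrt_nonneg 2, total, hs]

-- Backward direction: an explicit classical model for `η ≤ √2 / 2`.
set_option maxHeartbeats 1000000 in
lemma backward (η : ℝ) (hη0 : 0 ≤ η) (hle : η ≤ Real.sqrt 2 / 2) :
    IsClassicalStates (Rmat η) := by
  set s : ℝ := Real.sqrt 2 with hsdef
  have hs : s ^ 2 = 2 := Real.sq_sqrt (by norm_num)
  have hs0 : 0 ≤ s := Real.sqrt_nonneg 2
  have hs2 : s ≤ 2 := by nlinarith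
  have hηs : η * s ≤ 1 := by nlinarith
  have hηs0 : 0 ≤ η * s := mul_nonneg hη0 hs0
  have hs2c : ((s : ℝ) : ℂ) ^ 2 = 2 := by
    rw [← Complex.ofReal_pow, hs]; norm_num
  refine ⟨4,
    ![!![(((2+s)/4 : ℝ) : ℂ), ((s/4 : ℝ) : ℂ); ((s/4 : ℝ) : ℂ), (((2-s)/4 : ℝ) : ℂ)],
      !![(((2+s)/4 : ℝ) : ℂ), ((-(s/4) : ℝ) : ℂ); ((-(s/4) : ℝ) : ℂ), (((2-s)/4 : ℝ) : ℂ)],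
      !![(((2-s)/4 : ℝ) : ℂ), ((s/4 : ℝ) : ℂ); ((s/4 : ℝ) : ℂ), (((2+s)/4 : ℝ) : ℂ)],
      !![(((2-s)/4 : ℝ) : ℂ), ((-(s/4) : ℝ) : ℂ); ((-(s/4) : ℝ) : ℂ), (((2+s)/4 : ℝ) : ℂ)]],
    ![![(1+η*s)/4, (1-η*s)/4, (1+η*s)/4, (1-η*s)/4],
      ![(1+η*s)/4, (1-η*s)/4, (1-η*s)/4, (1+η*s)/4],
      ![(1-η*s)/4, (1+η*s)/4, (1+η*s)/4, (1-η*s)/4],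
      ![(1-η*s)/4, (1+η*s)/4, (1-η*s)/4, (1+η*s)/4]],
    ?_, ?_, ?_⟩
  · intro l
    fin_cases l <;> apply psd_of_real <;> nlinarith
  · intro l
    refine ⟨?_, ?_, ?_⟩
    · intro a
      fin_cases l <;> fin_cases a <;> simp [Matrix.vecHead, Matrix.vecTail] <;> linarith
    · fin_cases l <;> (simp [Fin.sum_univ_four]; ring)
    · intro α hα
      have h00 := congrArg (fun M => (M 0 0).re) hα
      have h11 := congrArg (fun M => (M 1 1).re) hα
      have h01 := congrArg (fun M => (M 0 1).re) hα
      simp [Matrix.sum_apply, Fin.sum_univ_four, Complex.smul_re, smul_eq_mul, Rmat]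
        at h00 h11 h01
      fin_cases l <;> simp [Fin.sum_univ_four]
      · linear_combination (1/4 + s/4) * h00 + (1/4 - s/4) * h11 + (s/2) * h01
      · linear_combination (1/4 + s/4) * h00 + (1/4 - s/4) * h11 - (s/2) * h01
      · linear_combination (1/4 - s/4) * h00 + (1/4 + s/4) * h11 + (s/2) * h01
      · linear_combination (1/4 - s/4) * h00 + (1/4 + s/4) * h11 - (s/2) * h01
  · intro a
    fin_cases a <;> (ext i j; fin_cases i <;> fin_cases j) <;>
      (simp [Fin.sum_univ_four, Rmat, Complex.real_smul, Matrix.vecHead, Matrix.vecTail];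
       try push_cast;
       try first
        | linear_combination (η/4 : ℂ) * hs2c
        | linear_combination (-(η/4) : ℂ) * hs2c
        | linear_combination ((η:ℂ)/2) * hs2c
        | linear_combination (-((η:ℂ)/2)) * hs2c
        | ring)

theorem bb84_states_white_noise_robustness (η : ℝ) (hη : η ∈ Set.Icc (0 : ℝ) 1) :
    IsClassicalStates
        (fun a : Fin 4 =>
          η • bb84States a + ((1 - η) * (2 : ℝ)⁻¹) • (1 : Matrix (Fin 2) (Fin 2) ℂ)) ↔
      η ≤ Real.sqrt 2 / 2 := by
  rw [rho_eq η]
  exact ⟨forward η, backward η hη.1⟩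

end
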